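/- Let C ⊆ F_2^n be a neural code. Then the set of minimal primes of the neural ideal of the polarized code equals the set of prime ideals of polarized maximal motifs of C: Min(J_{C^p}) = {p_{a^p} : a ∈ MaxMot(C)}, and this set is contained in Min(J_{C^[p]}). -/

import Mathlib

open MvPolynomial

/-- The field with two elements. -/
abbrev F2 := ZMod 2

/-- A motif indexed by `ι`: at each index it is `0`, `1`, or `*` (represented by `none`). -/
abbrev Motif (ι : Type*) := ι → Option F2

/-- The partial order on motifs: `a ≤ b` iff `a i = b i` for every index `i` with `b i ≠ *`. -/
def MotifLE {ι : Type*} (a b : Motif ι) : Prop :=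
  ∀ (i : ι) (x : F2), b i = some x → a i = some x

/-- The variety of a motif: all words agreeing with the motif on its non-`*` coordinates. -/
def variety {ι : Type*} (a : Motif ι) : Set (ι → F2) :=
  {w | ∀ (i : ι) (x : F2), a i = some x → w i = x}

/-- `a` is a motif of the code `C` iff its variety is contained in `C`. -/
def IsMotifOf {ι : Type*} (C : Set (ι → F2)) (a : Motif ι) : Prop :=
  variety a ⊆ C

/-- The set of maximal motifs of a code `C`. -/
def maxMot {ι : Type*} (C : Set (ι → F2)) : Set (Motif ι) :=
  {a | IsMotifOf C a ∧ ∀ b : Motif ι, IsMotifOf C b → MotifLE a b → a = b}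

/-- Two motifs are disjoint if at some index both are non-`*` and they differ. -/
def DisjointMotifs {ι : Type*} (a b : Motif ι) : Prop :=
  ∃ (i : ι) (x : F2), a i = some x ∧ b i = some (1 - x)

/-- Polarization of a motif of length `n`, as a motif of length `2n`
(indexed by `Fin n ⊕ Fin n`; `Sum.inl i` is coordinate `i`, `Sum.inr i` is coordinate `n+i`). -/
def polMotif {n : ℕ} (a : Motif (Fin n)) : Motif (Fin n ⊕ Fin n)
  | Sum.inl i => if a i = some 0 then some 0 else none
  | Sum.inr i => if a i = some 1 then some 0 else none

/-- The bar of a motif: `0 ↦ 1`, `1 ↦ 0`, `* ↦ *`. -/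
def barMotif {ι : Type*} (a : Motif ι) : Motif ι :=
  fun i => (a i).map (fun x => 1 - x)

/-- The polarization of a code `C ⊆ F₂ⁿ`: the union of the varieties of the
polarizations of the maximal motifs of `C`. -/
def polCode {n : ℕ} (C : Set (Fin n → F2)) : Set ((Fin n ⊕ Fin n) → F2) :=
  ⋃ a ∈ maxMot C, variety (polMotif a)

/-- The code `over-over-D-p` : the union of the varieties of `bar (pol (bar b))`
over the maximal motifs `b` of `D`. -/
def barPolBarCode {n : ℕ} (D : Set (Fin n → F2)) : Set ((Fin n ⊕ Fin n) → F2) :=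
  ⋃ b ∈ maxMot D, variety (barMotif (polMotif (barMotif b)))

/-- The formal polarization of a code `C`: the complement of `barPolBarCode` of `Cᶜ`. -/
def formalPol {n : ℕ} (C : Set (Fin n → F2)) : Set ((Fin n ⊕ Fin n) → F2) :=
  (barPolBarCode Cᶜ)ᶜ

/-- The Lagrange polynomial of a motif. -/
noncomputable def lagrange {ι : Type*} [Fintype ι] (a : Motif ι) : MvPolynomial ι F2 :=
  (∏ i ∈ Finset.univ.filter (fun i => a i = some 1), X i) *
    ∏ j ∈ Finset.univ.filter (fun j => a j = some 0), (1 - X j)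

/-- The motif (with no stars) corresponding to a word. -/
def wordMotif {ι : Type*} (w : ι → F2) : Motif ι := fun i => some (w i)

/-- The neural ideal of a code: generated by the Lagrange polynomials of the
words in the complement of the code. -/
noncomputable def neuralIdeal {ι : Type*} [Fintype ι] (C : Set (ι → F2)) :
    Ideal (MvPolynomial ι F2) :=
  Ideal.span ((fun w => lagrange (wordMotif w)) '' Cᶜ)

/-- The pseudo-monomial `∏_{i ∈ σ} X i * ∏_{j ∈ τ} (1 - X j)`. -/
noncomputable def pm {ι : Type*} (σ τ : Finset ι) : MvPolynomial ι F2 :=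
  (∏ i ∈ σ, X i) * ∏ j ∈ τ, (1 - X j)

/-- A polynomial is a pseudo-monomial if it equals `pm σ τ` for disjoint `σ τ`. -/
def IsPseudoMonomial {ι : Type*} (f : MvPolynomial ι F2) : Prop :=
  ∃ σ τ : Finset ι, Disjoint σ τ ∧ f = pm σ τ

/-- The canonical form of an ideal: the set of its minimal pseudo-monomials, i.e.
pseudo-monomials `f ∈ I` such that no pseudo-monomial `g ∈ I` of strictly smaller
degree divides `f`. -/
def CF {ι : Type*} (I : Ideal (MvPolynomial ι F2)) : Set (MvPolynomial ι F2) :=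
  {f | IsPseudoMonomial f ∧ f ∈ I ∧
    ¬ ∃ g : MvPolynomial ι F2, IsPseudoMonomial g ∧ g ∈ I ∧
      g.totalDegree < f.totalDegree ∧ g ∣ f}

/-- The polarization of the pseudo-monomial with data `(σ, τ)`:
`∏_{i ∈ σ} X i * ∏_{j ∈ τ} Y j` (here `Y j = X (Sum.inr j)`). -/
noncomputable def ppm {n : ℕ} (σ τ : Finset (Fin n)) : MvPolynomial (Fin n ⊕ Fin n) F2 :=
  (∏ i ∈ σ, X (Sum.inl i)) * ∏ j ∈ τ, X (Sum.inr j)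

/-- `g` is the polarization of the pseudo-monomial `f`. -/
def PolPM {n : ℕ} (f : MvPolynomial (Fin n) F2) (g : MvPolynomial (Fin n ⊕ Fin n) F2) : Prop :=
  ∃ σ τ : Finset (Fin n), Disjoint σ τ ∧ f = pm σ τ ∧ g = ppm σ τ

/-- The set of polarizations of the elements of a set of pseudo-monomials. -/
def polSet {n : ℕ} (S : Set (MvPolynomial (Fin n) F2)) :
    Set (MvPolynomial (Fin n ⊕ Fin n) F2) :=
  {g | ∃ f ∈ S, PolPM f g}

/-- The prime ideal of a motif: generated by `X i` for `a i = 0`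
and `1 - X j` for `a j = 1`. -/
noncomputable def pIdeal {ι : Type*} (a : Motif ι) : Ideal (MvPolynomial ι F2) :=
  Ideal.span ({f | ∃ i, a i = some 0 ∧ f = X i} ∪ {f | ∃ j, a j = some 1 ∧ f = 1 - X j})
/-! ### Auxiliary development -/

section Aux

variable {ι : Type*}

lemma F2_cases (x : F2) : x = 0 ∨ x = 1 := by revert x; decide

lemma F2_eq_one_of_ne (x : F2) (h : x ≠ 0) : x = 1 := by revert x; decide

lemma F2_eq_zero_of_ne (x : F2) (h : x ≠ 1) : x = 0 := by revert x; decide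

lemma motifLE_refl (a : Motif ι) : MotifLE a a := fun _ _ h => h

lemma motifLE_trans {a b c : Motif ι} (h1 : MotifLE a b) (h2 : MotifLE b c) :
    MotifLE a c := fun i x h => h1 i x (h2 i x h)

lemma motifLE_antisymm {a b : Motif ι} (h1 : MotifLE a b) (h2 : MotifLE b a) : a = b := by
  funext i
  cases hb : b i with
  | some x => exact h1 i x hb
  | none =>
    cases ha : a i with
    | none => rfl
    | some x => have := h2 i x ha; rw [hb] at this; cases this

/-- The evaluation map associated to a motif. -/
noncomputable def phiM (a : Motif ι) : MvPolynomial ι F2 →+* MvPolynomial ι F2 :=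
  (MvPolynomial.aeval (fun i => (a i).elim (X i) (fun x => C x)) :
    MvPolynomial ι F2 →ₐ[F2] MvPolynomial ι F2)

lemma phiM_X (a : Motif ι) (i : ι) : phiM a (X i) = (a i).elim (X i) (fun x => C x) := by
  simp [phiM]

lemma X_mem_pIdeal {a : Motif ι} {i : ι} (h : a i = some 0) : X i ∈ pIdeal a :=
  Ideal.subset_span (Or.inl ⟨i, h, rfl⟩)

lemma one_sub_X_mem_pIdeal {a : Motif ι} {j : ι} (h : a j = some 1) : 1 - X j ∈ pIdeal a :=
  Ideal.subset_span (Or.inr ⟨j, h, rfl⟩)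

lemma pIdeal_le_ker (a : Motif ι) : pIdeal a ≤ RingHom.ker (phiM a) := by
  rw [pIdeal, Ideal.span_le]
  rintro f (⟨i, hi, rfl⟩ | ⟨j, hj, rfl⟩)
  · simp [RingHom.mem_ker, phiM_X, hi]
  · simp [RingHom.mem_ker, phiM_X, hj]

lemma sub_phiM_mem (a : Motif ι) (f : MvPolynomial ι F2) : f - phiM a f ∈ pIdeal a := by
  induction f using MvPolynomial.induction_on with
  | C r => simp [phiM]
  | add f g hf hg =>
    have h : f + g - phiM a (f + g) = (f - phiM a f) + (g - phiM a g) := by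
      rw [map_add]; ring
    rw [h]; exact add_mem hf hg
  | mul_X f i hf =>
    have hX : X i - phiM a (X i) ∈ pIdeal a := by
      rw [phiM_X]
      cases hai : a i with
      | none => simp
      | some x =>
        rcases F2_cases x with rfl | rfl
        · simpa using X_mem_pIdeal hai
        · have : X i - (Option.some (1:F2)).elim (X i) (fun x => C x) = -(1 - X i) := by
            simp only [Option.elim]; rw [map_one]; ring
          rw [this]
          exact neg_mem (one_sub_X_mem_pIdeal hai)
    have h : f * X i - phiM a (f * X i)
        = (f - phiM a f) * X i + phiM a f * (X i - phiM a (X i)) := by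
      rw [map_mul]; ring
    rw [h]
    exact add_mem (Ideal.mul_mem_right _ _ hf) (Ideal.mul_mem_left _ _ hX)

lemma pIdeal_eq_ker (a : Motif ι) : pIdeal a = RingHom.ker (phiM a) := by
  refine le_antisymm (pIdeal_le_ker a) ?_
  intro f hf
  rw [RingHom.mem_ker] at hf
  have := sub_phiM_mem a f
  rwa [hf, sub_zero] at this

instance pIdeal_isPrime (a : Motif ι) : (pIdeal a).IsPrime := by
  rw [pIdeal_eq_ker]
  exact RingHom.ker_isPrime _

lemma X_mem_pIdeal_iff {a : Motif ι} {i : ι} : X i ∈ pIdeal a ↔ a i = some 0 := by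
  refine ⟨fun h => ?_, X_mem_pIdeal⟩
  have h0 : phiM a (X i) = 0 := pIdeal_le_ker a h
  rw [phiM_X] at h0
  cases hai : a i with
  | none => rw [hai] at h0; exact absurd h0 (MvPolynomial.X_ne_zero i)
  | some x =>
    rw [hai] at h0
    simp only [Option.elim, MvPolynomial.C_eq_zero] at h0
    rw [h0]

lemma one_sub_X_mem_pIdeal_iff {a : Motif ι} {j : ι} : 1 - X j ∈ pIdeal a ↔ a j = some 1 := by
  refine ⟨fun h => ?_, one_sub_X_mem_pIdeal⟩
  have h0 : phiM a (1 - X j) = 0 := pIdeal_le_ker a h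
  rw [map_sub, map_one, phiM_X] at h0
  cases haj : a j with
  | none =>
    rw [haj] at h0
    have := congrArg (MvPolynomial.eval (fun _ => (0 : F2))) h0
    simp at this
  | some x =>
    rw [haj] at h0
    simp only [Option.elim] at h0
    have hx : (C (1 - x) : MvPolynomial ι F2) = 0 := by rw [map_sub, map_one]; exact h0
    rw [MvPolynomial.C_eq_zero] at hx
    have : x = 1 := by
      have := sub_eq_zero.mp hx
      exact this.symm
    rw [this]

lemma pIdeal_le_pIdeal_iff {a b : Motif ι} : pIdeal a ≤ pIdeal b ↔ MotifLE b a := by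
  constructor
  · intro h i x hx
    rcases F2_cases x with rfl | rfl
    · exact X_mem_pIdeal_iff.mp (h (X_mem_pIdeal hx))
    · exact one_sub_X_mem_pIdeal_iff.mp (h (one_sub_X_mem_pIdeal hx))
  · intro h
    rw [pIdeal, Ideal.span_le]
    rintro f (⟨i, hi, rfl⟩ | ⟨j, hj, rfl⟩)
    · exact X_mem_pIdeal (h i 0 hi)
    · exact one_sub_X_mem_pIdeal (h j 1 hj)

end Aux
set_option linter.unusedSectionVars false

section Aux2

variable {ι : Type*} [Fintype ι]

lemma lagrange_mem_prime_iff {P : Ideal (MvPolynomial ι F2)} (hP : P.IsPrime) {w : ι → F2} :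
    lagrange (wordMotif w) ∈ P ↔
      (∃ i, w i = 1 ∧ X i ∈ P) ∨ (∃ j, w j = 0 ∧ 1 - X j ∈ P) := by
  classical
  haveI := hP
  constructor
  · intro h
    rcases hP.mem_or_mem h with h1 | h2
    · rw [Ideal.IsPrime.prod_mem_iff] at h1
      obtain ⟨i, hi, hXi⟩ := h1
      rw [Finset.mem_filter] at hi
      have : w i = 1 := Option.some_injective _ hi.2
      exact Or.inl ⟨i, this, hXi⟩
    · rw [Ideal.IsPrime.prod_mem_iff] at h2
      obtain ⟨j, hj, hXj⟩ := h2
      rw [Finset.mem_filter] at hj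
      have : w j = 0 := Option.some_injective _ hj.2
      exact Or.inr ⟨j, this, hXj⟩
  · rintro (⟨i, hwi, hXi⟩ | ⟨j, hwj, hXj⟩)
    · refine Ideal.mul_mem_right _ _ ?_
      rw [Ideal.IsPrime.prod_mem_iff]
      exact ⟨i, Finset.mem_filter.mpr ⟨Finset.mem_univ i, by rw [wordMotif, hwi]⟩, hXi⟩
    · refine Ideal.mul_mem_left _ _ ?_
      rw [Ideal.IsPrime.prod_mem_iff]
      exact ⟨j, Finset.mem_filter.mpr ⟨Finset.mem_univ j, by rw [wordMotif, hwj]⟩, hXj⟩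

lemma lagrange_mem_pIdeal_iff {a : Motif ι} {w : ι → F2} :
    lagrange (wordMotif w) ∈ pIdeal a ↔ w ∉ variety a := by
  rw [lagrange_mem_prime_iff (pIdeal_isPrime a)]
  constructor
  · rintro (⟨i, hwi, hXi⟩ | ⟨j, hwj, hXj⟩) hw
    · have := hw i 0 (X_mem_pIdeal_iff.mp hXi)
      rw [hwi] at this; exact one_ne_zero this
    · have := hw j 1 (one_sub_X_mem_pIdeal_iff.mp hXj)
      rw [hwj] at this; exact one_ne_zero this.symm
  · intro hw
    simp only [variety, Set.mem_setOf_eq, not_forall] at hw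
    obtain ⟨i, x, hx, hwx⟩ := hw
    rcases F2_cases x with rfl | rfl
    · exact Or.inl ⟨i, F2_eq_one_of_ne _ hwx, X_mem_pIdeal hx⟩
    · exact Or.inr ⟨i, F2_eq_zero_of_ne _ hwx, one_sub_X_mem_pIdeal hx⟩

lemma neuralIdeal_le_pIdeal_iff {E : Set (ι → F2)} {a : Motif ι} :
    neuralIdeal E ≤ pIdeal a ↔ IsMotifOf E a := by
  rw [neuralIdeal, Ideal.span_le]
  constructor
  · intro h w hw
    by_contra hwE
    have : lagrange (wordMotif w) ∈ pIdeal a :=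
      h (Set.mem_image_of_mem _ (Set.mem_compl hwE))
    exact lagrange_mem_pIdeal_iff.mp this hw
  · rintro h f ⟨w, hw, rfl⟩
    exact lagrange_mem_pIdeal_iff.mpr (fun hwa => hw (h hwa))

open Classical in
/-- The motif extracted from an ideal. -/
noncomputable def motifOf (P : Ideal (MvPolynomial ι F2)) : Motif ι :=
  fun i => if X i ∈ P then some 0 else if 1 - X i ∈ P then some 1 else none

lemma motifOf_eq_some_zero {P : Ideal (MvPolynomial ι F2)} {i : ι}
    (h : motifOf P i = some 0) : X i ∈ P := by
  rw [motifOf] at h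
  split_ifs at h with h1 h2
  · exact h1
  · simp at h

lemma motifOf_eq_some_one {P : Ideal (MvPolynomial ι F2)} {i : ι}
    (h : motifOf P i = some 1) : 1 - X i ∈ P := by
  rw [motifOf] at h
  split_ifs at h with h1 h2
  · simp at h
  · exact h2

lemma pIdeal_motifOf_le (P : Ideal (MvPolynomial ι F2)) : pIdeal (motifOf P) ≤ P := by
  rw [pIdeal, Ideal.span_le]
  rintro f (⟨i, hi, rfl⟩ | ⟨j, hj, rfl⟩)
  · exact motifOf_eq_some_zero hi
  · exact motifOf_eq_some_one hj

lemma isMotifOf_motifOf {P : Ideal (MvPolynomial ι F2)} (hP : P.IsPrime)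
    {E : Set (ι → F2)} (hJ : neuralIdeal E ≤ P) : IsMotifOf E (motifOf P) := by
  intro w hw
  by_contra hwE
  have hl : lagrange (wordMotif w) ∈ P :=
    hJ (Ideal.subset_span (Set.mem_image_of_mem _ (Set.mem_compl hwE)))
  rcases (lagrange_mem_prime_iff hP).mp hl with ⟨i, hwi, hXi⟩ | ⟨j, hwj, hXj⟩
  · have hm : motifOf P i = some 0 := by rw [motifOf, if_pos hXi]
    have := hw i 0 hm
    rw [hwi] at this; exact one_ne_zero this
  · by_cases hXj' : X j ∈ P
    · exact hP.ne_top (Ideal.eq_top_of_isUnit_mem P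
        (by simpa using add_mem hXj' hXj) isUnit_one)
    · have hm : motifOf P j = some 1 := by rw [motifOf, if_neg hXj', if_pos hXj]
      have := hw j 1 hm
      rw [hwj] at this; exact one_ne_zero this.symm

lemma motifLE_motifOf {P : Ideal (MvPolynomial ι F2)} {e : Motif ι}
    (h : P ≤ pIdeal e) : MotifLE e (motifOf P) := by
  intro i x hx
  rcases F2_cases x with rfl | rfl
  · exact X_mem_pIdeal_iff.mp (h (motifOf_eq_some_zero hx))
  · exact one_sub_X_mem_pIdeal_iff.mp (h (motifOf_eq_some_one hx))

/-- The general description of the minimal primes of a neural ideal. -/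
lemma minimalPrimes_neuralIdeal (E : Set (ι → F2)) :
    (neuralIdeal E).minimalPrimes = {P | ∃ e ∈ maxMot E, P = pIdeal e} := by
  ext P
  rw [Ideal.minimalPrimes, Set.mem_setOf_eq, Ideal.IsMinimalPrime, minimal_iff, Set.mem_setOf_eq]
  constructor
  · rintro ⟨⟨hPp, hJP⟩, hmin⟩
    set b := motifOf P with hbdef
    have hb : IsMotifOf E b := isMotifOf_motifOf hPp hJP
    have hpb : pIdeal b ≤ P := pIdeal_motifOf_le P
    have hJb : neuralIdeal E ≤ pIdeal b := neuralIdeal_le_pIdeal_iff.mpr hb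
    have hPeq : P = pIdeal b := hmin ⟨pIdeal_isPrime b, hJb⟩ hpb
    refine ⟨b, ⟨hb, ?_⟩, hPeq⟩
    intro c hc hbc
    have h1 : pIdeal c ≤ pIdeal b := pIdeal_le_pIdeal_iff.mpr hbc
    have h2 : P = pIdeal c :=
      hmin ⟨pIdeal_isPrime c, neuralIdeal_le_pIdeal_iff.mpr hc⟩ (h1.trans hpb)
    have h3 : MotifLE c b := pIdeal_le_pIdeal_iff.mp
      (by rw [← hPeq, h2])
    exact motifLE_antisymm hbc h3
  · rintro ⟨e, ⟨he, hemax⟩, rfl⟩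
    refine ⟨⟨pIdeal_isPrime e, neuralIdeal_le_pIdeal_iff.mpr he⟩, ?_⟩
    rintro Q ⟨hQp, hJQ⟩ hQle
    have hb : IsMotifOf E (motifOf Q) := isMotifOf_motifOf hQp hJQ
    have hle : MotifLE e (motifOf Q) := motifLE_motifOf hQle
    have heq : e = motifOf Q := hemax _ hb hle
    exact le_antisymm (by rw [heq]; exact pIdeal_motifOf_le Q) hQle

end Aux2
section Aux3

lemma exists_maxMot_ge {ι : Type*} [Fintype ι] [DecidableEq ι] {D : Set (ι → F2)}
    {d : Motif ι} (hd : IsMotifOf D d) : ∃ b ∈ maxMot D, MotifLE d b := by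
  classical
  set T : Finset (Motif ι) :=
    Finset.univ.filter (fun b => IsMotifOf D b ∧ MotifLE d b) with hT
  have hdT : d ∈ T := Finset.mem_filter.mpr ⟨Finset.mem_univ _, hd, motifLE_refl d⟩
  obtain ⟨b, hbT, hmax⟩ :=
    T.exists_max_image (fun b => (Finset.univ.filter (fun i => b i = none)).card) ⟨d, hdT⟩
  rw [hT, Finset.mem_filter] at hbT
  refine ⟨b, ⟨hbT.2.1, ?_⟩, hbT.2.2⟩
  intro c hc hbc
  have hcT : c ∈ T :=
    Finset.mem_filter.mpr ⟨Finset.mem_univ _, hc, motifLE_trans hbT.2.2 hbc⟩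
  have hsub : Finset.univ.filter (fun i => b i = none) ⊆
      Finset.univ.filter (fun i => c i = none) := by
    intro i hi
    rw [Finset.mem_filter] at hi ⊢
    refine ⟨Finset.mem_univ _, ?_⟩
    cases hci : c i with
    | none => rfl
    | some x => have := hbc i x hci; rw [hi.2] at this; cases this
  have hcard := hmax c hcT
  have heq := Finset.eq_of_subset_of_card_le hsub hcard
  funext i
  cases hci : c i with
  | some x => exact hbc i x hci
  | none =>
    have : i ∈ Finset.univ.filter (fun i => c i = none) :=
      Finset.mem_filter.mpr ⟨Finset.mem_univ _, hci⟩
    rw [← heq, Finset.mem_filter] at this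
    rw [this.2]

variable {n : ℕ}

lemma polMotif_inl_some {a : Motif (Fin n)} {i : Fin n} {x : F2}
    (h : polMotif a (Sum.inl i) = some x) : a i = some 0 ∧ x = 0 := by
  rw [polMotif] at h
  split_ifs at h with h1
  · exact ⟨h1, (Option.some_injective _ h).symm⟩

lemma polMotif_inr_some {a : Motif (Fin n)} {i : Fin n} {x : F2}
    (h : polMotif a (Sum.inr i) = some x) : a i = some 1 ∧ x = 0 := by
  rw [polMotif] at h
  split_ifs at h with h1
  · exact ⟨h1, (Option.some_injective _ h).symm⟩

lemma polMotif_inl_of {a : Motif (Fin n)} {i : Fin n} (h : a i = some 0) :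
    polMotif a (Sum.inl i) = some 0 := by rw [polMotif, if_pos h]

lemma polMotif_inr_of {a : Motif (Fin n)} {i : Fin n} (h : a i = some 1) :
    polMotif a (Sum.inr i) = some 0 := by rw [polMotif, if_pos h]

lemma motifLE_of_polMotifLE {a a' : Motif (Fin n)}
    (h : MotifLE (polMotif a) (polMotif a')) : MotifLE a a' := by
  intro i x hx
  rcases F2_cases x with rfl | rfl
  · exact (polMotif_inl_some (h (Sum.inl i) 0 (polMotif_inl_of hx))).1
  · exact (polMotif_inr_some (h (Sum.inr i) 0 (polMotif_inr_of hx))).1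

lemma polMotif_isMotifOf_polCode {C : Set (Fin n → F2)} {a : Motif (Fin n)}
    (ha : a ∈ maxMot C) : IsMotifOf (polCode C) (polMotif a) := by
  intro w hw
  exact Set.mem_biUnion ha hw

/-- Every motif of the polarized code lies below a polarized maximal motif. -/
lemma motif_polCode_le {C : Set (Fin n → F2)} {c : Motif (Fin n ⊕ Fin n)}
    (hc : IsMotifOf (polCode C) c) : ∃ a ∈ maxMot C, MotifLE c (polMotif a) := by
  classical
  set w : (Fin n ⊕ Fin n) → F2 := fun j => if c j = some 0 then 0 else 1 with hwdef
  have hwc : w ∈ variety c := by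
    intro j x hx
    rcases F2_cases x with rfl | rfl
    · simp [hwdef, hx]
    · have : c j ≠ some 0 := by rw [hx]; simp
      simp [hwdef, this]
  have hwP := hc hwc
  rw [polCode, Set.mem_iUnion₂] at hwP
  obtain ⟨a, ha, hwa⟩ := hwP
  refine ⟨a, ha, ?_⟩
  intro j x hx
  obtain rfl : x = 0 := by
    cases j with
    | inl i => exact (polMotif_inl_some hx).2
    | inr i => exact (polMotif_inr_some hx).2
  have hwj : w j = 0 := hwa j 0 hx
  by_contra hcj
  simp [hwdef, hcj] at hwj

lemma maxMot_polCode {C : Set (Fin n → F2)} :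
    maxMot (polCode C) = {c | ∃ a ∈ maxMot C, c = polMotif a} := by
  ext c
  constructor
  · rintro ⟨hc, hcmax⟩
    obtain ⟨a, ha, hle⟩ := motif_polCode_le hc
    exact ⟨a, ha, hcmax _ (polMotif_isMotifOf_polCode ha) hle⟩
  · rintro ⟨a, ha, rfl⟩
    refine ⟨polMotif_isMotifOf_polCode ha, ?_⟩
    intro c hc hle
    obtain ⟨a', ha', hle'⟩ := motif_polCode_le hc
    have haa' : MotifLE a a' := motifLE_of_polMotifLE (motifLE_trans hle hle')
    obtain rfl : a = a' := ha.2 a' ha'.1 haa'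
    exact motifLE_antisymm hle hle'

lemma mbar_inl_some {b : Motif (Fin n)} {i : Fin n} {x : F2}
    (h : barMotif (polMotif (barMotif b)) (Sum.inl i) = some x) : b i = some 1 ∧ x = 1 := by
  rw [barMotif, polMotif] at h
  split_ifs at h with h1
  · rw [barMotif] at h1
    cases hbi : b i with
    | none => rw [hbi] at h1; cases h1
    | some y =>
      rw [hbi] at h1
      simp only [Option.map_some] at h1
      have hy : y = 1 := by
        have := Option.some_injective _ h1
        rcases F2_cases y with rfl | rfl
        · simp at this
        · rfl
      subst hy
      simp only [Option.map_some] at h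
      exact ⟨rfl, by simpa using (Option.some_injective _ h).symm⟩
  · simp at h

lemma mbar_inr_some {b : Motif (Fin n)} {i : Fin n} {x : F2}
    (h : barMotif (polMotif (barMotif b)) (Sum.inr i) = some x) : b i = some 0 ∧ x = 1 := by
  rw [barMotif, polMotif] at h
  split_ifs at h with h1
  · rw [barMotif] at h1
    cases hbi : b i with
    | none => rw [hbi] at h1; cases h1
    | some y =>
      rw [hbi] at h1
      simp only [Option.map_some] at h1
      have hy : y = 0 := by
        have := Option.some_injective _ h1
        rcases F2_cases y with rfl | rfl
        · rfl
        · simp at this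
      subst hy
      simp only [Option.map_some] at h
      exact ⟨rfl, by simpa using (Option.some_injective _ h).symm⟩
  · simp at h

lemma mbar_inl_of {b : Motif (Fin n)} {i : Fin n} (h : b i = some 1) :
    barMotif (polMotif (barMotif b)) (Sum.inl i) = some 1 := by
  have h1 : barMotif b i = some 0 := by simp [barMotif, h]
  simp [barMotif, polMotif, h]

lemma mbar_inr_of {b : Motif (Fin n)} {i : Fin n} (h : b i = some 0) :
    barMotif (polMotif (barMotif b)) (Sum.inr i) = some 1 := by
  simp [barMotif, polMotif, h]

end Aux3
section Aux4

variable {n : ℕ}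

lemma polMotif_isMotifOf_formalPol {C : Set (Fin n → F2)} {a : Motif (Fin n)}
    (ha : a ∈ maxMot C) : IsMotifOf (formalPol C) (polMotif a) := by
  classical
  intro w hw
  rw [formalPol, Set.mem_compl_iff]
  intro hmem
  rw [barPolBarCode, Set.mem_iUnion₂] at hmem
  obtain ⟨b, hb, hwb⟩ := hmem
  set u : Fin n → F2 :=
    fun i => if a i = some 1 then 1 else if b i = some 1 then 1 else 0 with hu
  have hua : u ∈ variety a := by
    intro i x hx
    rcases F2_cases x with rfl | rfl
    · have hne1 : a i ≠ some 1 := by rw [hx]; simp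
      have hbne : b i ≠ some 1 := by
        intro hb1
        have h1 := hwb (Sum.inl i) 1 (mbar_inl_of hb1)
        have h0 := hw (Sum.inl i) 0 (polMotif_inl_of hx)
        rw [h1] at h0; exact one_ne_zero h0
      simp [hu, hne1, hbne]
    · simp [hu, hx]
  have hub : u ∈ variety b := by
    intro i x hx
    rcases F2_cases x with rfl | rfl
    · have hne1 : a i ≠ some 1 := by
        intro ha1
        have h1 := hwb (Sum.inr i) 1 (mbar_inr_of hx)
        have h0 := hw (Sum.inr i) 0 (polMotif_inr_of ha1)
        rw [h1] at h0; exact one_ne_zero h0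
      have hbne : b i ≠ some 1 := by rw [hx]; simp
      simp [hu, hne1, hbne]
    · by_cases ha1 : a i = some 1
      · simp [hu, ha1]
      · simp [hu, ha1, hx]
  exact hb.1 hub (ha.1 hua)

lemma polMotif_mem_maxMot_formalPol {C : Set (Fin n → F2)} {a : Motif (Fin n)}
    (ha : a ∈ maxMot C) : polMotif a ∈ maxMot (formalPol C) := by
  classical
  refine ⟨polMotif_isMotifOf_formalPol ha, ?_⟩
  intro c hc hac
  by_contra hne
  obtain ⟨j0, hj0⟩ : ∃ j0, polMotif a j0 ≠ c j0 := by
    by_contra h; push_neg at h; exact hne (funext h)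
  have hcj0 : c j0 = none := by
    cases hc0 : c j0 with
    | none => rfl
    | some x => exact absurd ((hac j0 x hc0).trans hc0.symm) hj0
  obtain ⟨x0, hpj0⟩ : ∃ x, polMotif a j0 = some x := by
    cases hp : polMotif a j0 with
    | none => rw [hp, hcj0] at hj0; exact absurd rfl hj0
    | some x => exact ⟨x, rfl⟩
  cases j0 with
  | inl i0 =>
    obtain ⟨hai0, rfl⟩ := polMotif_inl_some hpj0
    set a' : Motif (Fin n) := Function.update a i0 none with ha'
    have hlea : MotifLE a a' := by
      intro i x hx
      by_cases hii : i = i0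
      · subst hii; rw [ha', Function.update_self] at hx; cases hx
      · rw [ha', Function.update_of_ne hii] at hx; exact hx
    have hne' : a ≠ a' := by
      intro h
      have := congrFun h i0
      rw [ha', Function.update_self, hai0] at this; cases this
    have hnm : ¬ IsMotifOf C a' := fun h => hne' (ha.2 a' h hlea)
    rw [IsMotifOf, Set.not_subset] at hnm
    obtain ⟨v, hv1, hv2⟩ := hnm
    have hv' : ∀ i, i ≠ i0 → ∀ x : F2, a i = some x → v i = x := by
      intro i hi x hx
      exact hv1 i x (by rw [ha', Function.update_of_ne hi]; exact hx)
    have hvm : IsMotifOf Cᶜ (wordMotif v) := by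
      intro u hu
      have : u = v := funext fun i => hu i (v i) rfl
      rw [this]; exact hv2
    obtain ⟨b, hbmax, hbv'⟩ := exists_maxMot_ge hvm
    have hbv : ∀ i (x : F2), b i = some x → v i = x := by
      intro i x hx
      exact Option.some_injective _ (hbv' i x hx)
    set w' : (Fin n ⊕ Fin n) → F2 :=
      Sum.elim (fun i => if b i = some 1 then 1 else 0)
        (fun i => if b i = some 0 then 1 else 0) with hw'
    have hw1 : w' ∈ variety (barMotif (polMotif (barMotif b))) := by
      intro j x hx
      cases j with
      | inl i => obtain ⟨hb1, rfl⟩ := mbar_inl_some hx; simp [hw', hb1]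
      | inr i => obtain ⟨hb0, rfl⟩ := mbar_inr_some hx; simp [hw', hb0]
    have hw2 : w' ∈ variety c := by
      intro j x hx
      have hpj := hac j x hx
      cases j with
      | inl i =>
        obtain ⟨hai, rfl⟩ := polMotif_inl_some hpj
        have hii0 : i ≠ i0 := by
          intro h; subst h; rw [hx] at hcj0; cases hcj0
        have hbne : b i ≠ some 1 := by
          intro hb1
          have := hbv i 1 hb1
          rw [hv' i hii0 0 hai] at this
          exact one_ne_zero this.symm
        simp [hw', hbne]
      | inr i =>
        obtain ⟨hai, rfl⟩ := polMotif_inr_some hpj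
        have hii0 : i ≠ i0 := by
          intro h; subst h; rw [hai0] at hai; simp at hai
        have hbne : b i ≠ some 0 := by
          intro hb0
          have := hbv i 0 hb0
          rw [hv' i hii0 1 hai] at this
          exact one_ne_zero this
        simp [hw', hbne]
    have hmem : w' ∈ barPolBarCode Cᶜ := Set.mem_biUnion hbmax hw1
    have hfc := hc hw2
    rw [formalPol, Set.mem_compl_iff] at hfc
    exact hfc hmem
  | inr i0 =>
    obtain ⟨hai0, rfl⟩ := polMotif_inr_some hpj0
    set a' : Motif (Fin n) := Function.update a i0 none with ha'
    have hlea : MotifLE a a' := by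
      intro i x hx
      by_cases hii : i = i0
      · subst hii; rw [ha', Function.update_self] at hx; cases hx
      · rw [ha', Function.update_of_ne hii] at hx; exact hx
    have hne' : a ≠ a' := by
      intro h
      have := congrFun h i0
      rw [ha', Function.update_self, hai0] at this; cases this
    have hnm : ¬ IsMotifOf C a' := fun h => hne' (ha.2 a' h hlea)
    rw [IsMotifOf, Set.not_subset] at hnm
    obtain ⟨v, hv1, hv2⟩ := hnm
    have hv' : ∀ i, i ≠ i0 → ∀ x : F2, a i = some x → v i = x := by
      intro i hi x hx
      exact hv1 i x (by rw [ha', Function.update_of_ne hi]; exact hx)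
    have hvm : IsMotifOf Cᶜ (wordMotif v) := by
      intro u hu
      have : u = v := funext fun i => hu i (v i) rfl
      rw [this]; exact hv2
    obtain ⟨b, hbmax, hbv'⟩ := exists_maxMot_ge hvm
    have hbv : ∀ i (x : F2), b i = some x → v i = x := by
      intro i x hx
      exact Option.some_injective _ (hbv' i x hx)
    set w' : (Fin n ⊕ Fin n) → F2 :=
      Sum.elim (fun i => if b i = some 1 then 1 else 0)
        (fun i => if b i = some 0 then 1 else 0) with hw'
    have hw1 : w' ∈ variety (barMotif (polMotif (barMotif b))) := by
      intro j x hx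
      cases j with
      | inl i => obtain ⟨hb1, rfl⟩ := mbar_inl_some hx; simp [hw', hb1]
      | inr i => obtain ⟨hb0, rfl⟩ := mbar_inr_some hx; simp [hw', hb0]
    have hw2 : w' ∈ variety c := by
      intro j x hx
      have hpj := hac j x hx
      cases j with
      | inl i =>
        obtain ⟨hai, rfl⟩ := polMotif_inl_some hpj
        have hii0 : i ≠ i0 := by
          intro h; subst h; rw [hai0] at hai; simp at hai
        have hbne : b i ≠ some 1 := by
          intro hb1
          have := hbv i 1 hb1
          rw [hv' i hii0 0 hai] at this
          exact one_ne_zero this.symm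
        simp [hw', hbne]
      | inr i =>
        obtain ⟨hai, rfl⟩ := polMotif_inr_some hpj
        have hii0 : i ≠ i0 := by
          intro h; subst h; rw [hx] at hcj0; cases hcj0
        have hbne : b i ≠ some 0 := by
          intro hb0
          have := hbv i 0 hb0
          rw [hv' i hii0 1 hai] at this
          exact one_ne_zero this
        simp [hw', hbne]
    have hmem : w' ∈ barPolBarCode Cᶜ := Set.mem_biUnion hbmax hw1
    have hfc := hc hw2
    rw [formalPol, Set.mem_compl_iff] at hfc
    exact hfc hmem

end Aux4
/-- `Min(J_{Cᵖ}) = {p_{aᵖ} : a ∈ MaxMot C}` and this set is contained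
in `Min(J_{C^[p]})`. -/
theorem minimalPrimes_neuralIdeal_polCode {n : ℕ} (C : Set (Fin n → F2)) :
    (neuralIdeal (polCode C)).minimalPrimes =
      {P | ∃ a ∈ maxMot C, P = pIdeal (polMotif a)} ∧
    {P | ∃ a ∈ maxMot C, P = pIdeal (polMotif a)} ⊆
      (neuralIdeal (formalPol C)).minimalPrimes := by
  constructor
  · rw [minimalPrimes_neuralIdeal (polCode C)]
    ext P
    simp only [Set.mem_setOf_eq]
    constructor
    · rintro ⟨e, he, rfl⟩
      rw [maxMot_polCode] at he
      obtain ⟨a, ha, rfl⟩ := he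
      exact ⟨a, ha, rfl⟩
    · rintro ⟨a, ha, rfl⟩
      exact ⟨polMotif a, by rw [maxMot_polCode]; exact ⟨a, ha, rfl⟩, rfl⟩
  · rintro P ⟨a, ha, rfl⟩
    rw [minimalPrimes_neuralIdeal (formalPol C)]
    exact ⟨polMotif a, polMotif_mem_maxMot_formalPol ha, rfl⟩
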